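/- For 0 < ε ≤ 1/4, the piecewise regularization h_ε defined by h_ε(z) = 0 for z < 0; h_ε(z) = −z³/ε² + (2/ε − 1)z² for 0 ≤ z < ε; h_ε(z) = z(1−z) for ε ≤ z ≤ 1−ε; h_ε(z) = z³/ε² + (−3/ε² + 2/ε − 1)z² + (3/ε² − 4/ε + 2)z − 1/ε² + 2/ε − 1 for 1−ε < z ≤ 1; h_ε(z) = 0 for z > 1, satisfies |h(z) − h_ε(z)| ≤ ε − ε² for all z ∈ ℝ, where h(z) = z⁺(1−z)⁺. -/
import Mathlib


noncomputable def heps (ε : ℝ) (z : ℝ) : ℝ :=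
  if z < 0 then 0
  else if z < ε then -z ^ 3 / ε ^ 2 + (2 / ε - 1) * z ^ 2
  else if z ≤ 1 - ε then z * (1 - z)
  else if z ≤ 1 then
    z ^ 3 / ε ^ 2 + (-3 / ε ^ 2 + 2 / ε - 1) * z ^ 2 + (3 / ε ^ 2 - 4 / ε + 2) * z
      - 1 / ε ^ 2 + 2 / ε - 1
  else 0

lemma aux_bound (ε : ℝ) (hε0 : 0 < ε) (hε : ε ≤ 1 / 4) (w : ℝ) (hw0 : 0 ≤ w)
    (hw1 : w ≤ ε) : |w * (ε - w) ^ 2 / ε ^ 2| ≤ ε - ε ^ 2 := by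
  have hε2 : (0:ℝ) < ε ^ 2 := by positivity
  rw [abs_of_nonneg (by positivity), div_le_iff₀ hε2]
  have key : 0 ≤ (3 * w - ε) ^ 2 * (4 * ε - 3 * w) :=
    mul_nonneg (sq_nonneg _) (by nlinarith)
  have hc : 0 ≤ ε ^ 3 * (23 - 27 * ε) := by
    apply mul_nonneg (by positivity); linarith
  nlinarith [key, hc]

theorem heps_close (ε : ℝ) (hε0 : 0 < ε) (hε : ε ≤ 1 / 4) :
    ∀ z : ℝ, |max 0 z * max 0 (1 - z) - heps ε z| ≤ ε - ε ^ 2 := by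
  intro z
  have hεne : ε ≠ 0 := ne_of_gt hε0
  have hnn : 0 ≤ ε - ε ^ 2 := by nlinarith
  unfold heps
  split_ifs with h1 h2 h3 h4
  · rw [max_eq_left h1.le]
    simpa using hnn
  · push_neg at h1
    have hz1 : z < 1 := by linarith
    rw [max_eq_right h1, max_eq_right (by linarith : (0:ℝ) ≤ 1 - z)]
    have heq : z * (1 - z) - (-z ^ 3 / ε ^ 2 + (2 / ε - 1) * z ^ 2)
        = z * (ε - z) ^ 2 / ε ^ 2 := by field_simp; ring
    rw [heq]
    exact aux_bound ε hε0 hε z h1 h2.le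
  · push_neg at h1 h2
    rw [max_eq_right h1, max_eq_right (by linarith : (0:ℝ) ≤ 1 - z)]
    simpa using hnn
  · push_neg at h1 h2 h3
    rw [max_eq_right h1, max_eq_right (by linarith : (0:ℝ) ≤ 1 - z)]
    have heq : z * (1 - z) - (z ^ 3 / ε ^ 2 + (-3 / ε ^ 2 + 2 / ε - 1) * z ^ 2
        + (3 / ε ^ 2 - 4 / ε + 2) * z - 1 / ε ^ 2 + 2 / ε - 1)
        = (1 - z) * (ε - (1 - z)) ^ 2 / ε ^ 2 := by field_simp; ring
    rw [heq]
    exact aux_bound ε hε0 hε (1 - z) (by linarith) (by linarith)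
  · push_neg at h4
    rw [max_eq_left (by linarith : 1 - z ≤ 0)]
    simpa using hnn
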